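/- Let $\Gamma$ be a $(Y,Y')$-distance-biregular graph. For any odd integer $i$ with $3 \le i \le \min\{D, D'\}$, the products of intersection numbers satisfy $c_1 c_2 \cdots c_i = c'_1 c'_2 \cdots c'_i$. -/

import Mathlib

open SimpleGraph Set

/-- A `(Y,Y')`-distance-biregular graph: a finite connected bipartite graph in which
every vertex is distance-regularized, and vertices in the same color class share the
same intersection numbers (`c`, `b` for class `Y` and `c'`, `b'` for class `Y'`),
while the two color classes have different intersection arrays.
`D` (resp. `D'`) is the common eccentricity of vertices in `Y` (resp. `Y'`). -/
structure DBRG (V : Type) [Fintype V] where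
  G : SimpleGraph V
  conn : G.Connected
  Y : Finset V
  Y' : Finset V
  Yne : Y.Nonempty
  Y'ne : Y'.Nonempty
  cover : ∀ v, v ∈ Y ∨ v ∈ Y'
  disj : ∀ v, ¬(v ∈ Y ∧ v ∈ Y')
  bip : ∀ u v, G.Adj u v → (u ∈ Y ↔ v ∈ Y')
  D : ℕ
  D' : ℕ
  eccY : ∀ x ∈ Y, (∃ y, G.dist x y = D) ∧ ∀ y, G.dist x y ≤ D
  eccY' : ∀ x ∈ Y', (∃ y, G.dist x y = D') ∧ ∀ y, G.dist x y ≤ D'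
  c : ℕ → ℕ
  b : ℕ → ℕ
  c' : ℕ → ℕ
  b' : ℕ → ℕ
  hc : ∀ i, 1 ≤ i → ∀ x ∈ Y, ∀ z, G.dist x z = i →
    {w | G.Adj z w ∧ G.dist x w = i - 1}.ncard = c i
  hb : ∀ i, ∀ x ∈ Y, ∀ z, G.dist x z = i →
    {w | G.Adj z w ∧ G.dist x w = i + 1}.ncard = b i
  hc' : ∀ i, 1 ≤ i → ∀ x ∈ Y', ∀ z, G.dist x z = i →
    {w | G.Adj z w ∧ G.dist x w = i - 1}.ncard = c' i
  hb' : ∀ i, ∀ x ∈ Y', ∀ z, G.dist x z = i →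
    {w | G.Adj z w ∧ G.dist x w = i + 1}.ncard = b' i
  c0 : c 0 = 0
  c'0 : c' 0 = 0
  nonreg : ¬ (∀ i, c i = c' i ∧ b i = b' i)

/-- `Γ` is `2`-`Y`-homogeneous with parameters `γ i`: for all `1 ≤ i ≤ D - 1` and all
`x ∈ Y`, `y ∈ Γ₂(x)`, `z ∈ Γ_{i,i}(x,y)`, the number of common neighbours of `x` and `y`
at distance `i - 1` from `z` equals `γ i` (independently of `x`, `y`, `z`). -/
def DBRG.TwoYHom {V : Type} [Fintype V] (Γ : DBRG V) (γ : ℕ → ℕ) : Prop :=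
  ∀ i, 1 ≤ i → i ≤ Γ.D - 1 → ∀ x ∈ Γ.Y, ∀ y, Γ.G.dist x y = 2 →
    ∀ z, Γ.G.dist x z = i → Γ.G.dist y z = i →
      {w | Γ.G.dist z w = i - 1 ∧ Γ.G.Adj x w ∧ Γ.G.Adj y w}.ncard = γ i

section Aux

variable {V : Type} [Fintype V]

/-- Number of walks of length `dist x u` from `u` to `x` equals the product of the
intersection numbers of the base point `x`. -/
lemma count_geodesics [DecidableEq V] (G : SimpleGraph V) [DecidableRel G.Adj]
    (hconn : G.Connected) (x : V) (f : ℕ → ℕ)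
    (H : ∀ m, 1 ≤ m → ∀ z, G.dist x z = m →
      {w | G.Adj z w ∧ G.dist x w = m - 1}.ncard = f m) :
    ∀ n u, G.dist x u = n →
      (G.finsetWalkLength n u x).card = ∏ l ∈ Finset.Icc 1 n, f l := by
  intro n
  induction n with
  | zero =>
    intro u hu
    have hx : x = u := (hconn.dist_eq_zero_iff).mp hu
    subst hx
    simp [finsetWalkLength]
  | succ n ih =>
    intro u hu
    -- decompose walks by their first edge
    have hcard : (G.finsetWalkLength (n + 1) u x).card
        = ∑ w ∈ G.neighborFinset u, (G.finsetWalkLength n w x).card := by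
      rw [show G.finsetWalkLength (n + 1) u x =
        Finset.univ.biUnion fun (w : G.neighborSet u) =>
          (G.finsetWalkLength n w x).map
            ⟨fun p => Walk.cons w.property p, fun _ _ h => by cases h; rfl⟩ from rfl]
      rw [Finset.card_biUnion]
      · rw [Finset.sum_subtype (p := fun w => w ∈ G.neighborSet u) (G.neighborFinset u)
          (fun w => by simp [mem_neighborFinset, mem_neighborSet])
          (fun w => (G.finsetWalkLength n w x).card)]
        · simp
        · infer_instance
      · intro a _ b _ hab
        simp only [Finset.disjoint_left, Finset.mem_map]
        rintro p ⟨p1, _, rfl⟩ ⟨p2, _, h2⟩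
        apply hab
        have h3 := congrArg (fun q => q.getVert 1) h2
        change (Walk.cons _ p2).getVert 1 = (Walk.cons _ p1).getVert 1 at h3
        change p2.getVert 0 = p1.getVert 0 at h3
        rw [Walk.getVert_zero, Walk.getVert_zero] at h3
        exact Subtype.ext h3.symm
    -- zero contribution from neighbours not at distance n
    have hzero : ∀ w, G.Adj u w → G.dist x w ≠ n →
        (G.finsetWalkLength n w x).card = 0 := by
      intro w hw hwn
      rw [Finset.card_eq_zero, Finset.eq_empty_iff_forall_notMem]
      intro p hp
      have hlen : p.length = n := mem_finsetWalkLength_iff.mp hp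
      have h1 : G.dist x w ≤ n := by
        have := dist_le p
        rw [hlen] at this
        calc G.dist x w = G.dist w x := SimpleGraph.dist_comm
          _ ≤ n := this
      have h2 : n + 1 ≤ G.dist x w + 1 := by
        have huw : G.dist w u = 1 := dist_eq_one_iff_adj.mpr hw.symm
        calc n + 1 = G.dist x u := hu.symm
          _ ≤ G.dist x w + G.dist w u := hconn.dist_triangle
          _ = G.dist x w + 1 := by rw [huw]
      exact hwn (le_antisymm h1 (by omega))
    have hsum : ∑ w ∈ G.neighborFinset u, (G.finsetWalkLength n w x).card
        = ((G.neighborFinset u).filter fun w => G.dist x w = n).card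
            * ∏ l ∈ Finset.Icc 1 n, f l := by
      rw [← Finset.sum_filter_add_sum_filter_not (G.neighborFinset u)
        (fun w => G.dist x w = n)]
      have e1 : ∑ w ∈ (G.neighborFinset u).filter (fun w => G.dist x w = n),
          (G.finsetWalkLength n w x).card
          = ((G.neighborFinset u).filter fun w => G.dist x w = n).card
              * ∏ l ∈ Finset.Icc 1 n, f l := by
        rw [Finset.sum_congr rfl (fun w hw => ih w (Finset.mem_filter.mp hw).2)]
        simp [mul_comm]
      have e2 : ∑ w ∈ (G.neighborFinset u).filter (fun w => ¬ G.dist x w = n),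
          (G.finsetWalkLength n w x).card = 0 := by
        apply Finset.sum_eq_zero
        intro w hw
        have hw' := Finset.mem_filter.mp hw
        exact hzero w ((mem_neighborFinset G u w).mp hw'.1) hw'.2
      rw [e1, e2, add_zero]
    -- the filter has cardinality `f (n+1)`
    have hf : ((G.neighborFinset u).filter fun w => G.dist x w = n).card = f (n + 1) := by
      have hH := H (n + 1) (by omega) u hu
      have hset : {w | G.Adj u w ∧ G.dist x w = n + 1 - 1}
          = ↑((G.neighborFinset u).filter fun w => G.dist x w = n) := by
        ext w
        simp [mem_neighborFinset]
      rw [hset, Set.ncard_coe_finset] at hH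
      exact hH
    rw [hcard, hsum, hf, Finset.prod_Icc_succ_top (by omega : 1 ≤ n + 1), mul_comm]

lemma exists_at_dist (G : SimpleGraph V) (hconn : G.Connected) (x : V) :
    ∀ n y, G.dist x y = n → ∀ i ≤ n, ∃ z, G.dist x z = i := by
  intro n
  induction n with
  | zero => intro y _ i hi; exact ⟨x, by simpa [Nat.le_zero.mp hi] using G.dist_self x⟩
  | succ n ih =>
    intro y hy i hi
    rcases Nat.lt_or_ge i (n + 1) with h | h
    · obtain ⟨p, hp⟩ := (hconn x y).exists_walk_length_eq_dist
      rw [hy] at hp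
      cases hq : p.reverse with
      | nil =>
        exfalso
        have := Walk.length_reverse p
        rw [hq] at this
        simp [hp] at this
      | cons hadj q =>
        rename_i w
        have hql : q.length = n := by
          have := Walk.length_reverse p
          rw [hq] at this
          simp only [Walk.length_cons, hp] at this
          omega
        have h1 : G.dist x w ≤ n := by
          have := dist_le q.reverse
          rwa [Walk.length_reverse, hql] at this
        have h2 : G.dist x w = n := by
          have hyx : G.dist x y ≤ G.dist x w + 1 := by
            have hw1 : G.dist w y = 1 := dist_eq_one_iff_adj.mpr hadj.symm
            calc G.dist x y ≤ G.dist x w + G.dist w y := hconn.dist_triangle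
              _ = G.dist x w + 1 := by rw [hw1]
          omega
        exact ih w h2 i (by omega)
    · exact ⟨y, by omega⟩

lemma walk_parity (Γ : DBRG V) :
    ∀ {u v : V} (p : Γ.G.Walk u v), (u ∈ Γ.Y ↔ v ∈ Γ.Y) ↔ Even p.length := by
  intro u v p
  induction p with
  | nil => simp
  | cons hadj q ihq =>
    rename_i a b c
    have h1 : a ∈ Γ.Y ↔ b ∈ Γ.Y' := Γ.bip a b hadj
    have h2 : b ∈ Γ.Y' ↔ ¬ b ∈ Γ.Y := by
      have := Γ.cover b; have := Γ.disj b; tauto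
    simp only [Walk.length_cons, Nat.even_add_one, ← ihq]
    tauto

end Aux


theorem stmt_5 {V : Type} [Fintype V] (Γ : DBRG V) (hD : 3 ≤ Γ.D)
    (i : ℕ) (hodd : Odd i) (hi1 : 3 ≤ i) (hi2 : i ≤ min Γ.D Γ.D') :
    ∏ l ∈ Finset.Icc 1 i, Γ.c l = ∏ l ∈ Finset.Icc 1 i, Γ.c' l := by
  classical
  obtain ⟨x, hx⟩ := Γ.Yne
  obtain ⟨⟨y0, hy0⟩, -⟩ := Γ.eccY x hx
  obtain ⟨y, hy⟩ := exists_at_dist Γ.G Γ.conn x Γ.D y0 hy0 i (le_trans hi2 (min_le_left _ _))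
  -- y ∈ Y'
  have hyY' : y ∈ Γ.Y' := by
    obtain ⟨p, hp⟩ := (Γ.conn x y).exists_walk_length_eq_dist
    have hplen : p.length = i := by rw [hp, hy]
    rcases Γ.cover y with h | h
    · exfalso
      have := (walk_parity Γ p).mp (by tauto)
      rw [hplen] at this
      exact (Nat.not_even_iff_odd.mpr hodd) this
    · exact h
  have h1 : (Γ.G.finsetWalkLength i y x).card = ∏ l ∈ Finset.Icc 1 i, Γ.c l :=
    count_geodesics Γ.G Γ.conn x Γ.c (fun m hm z hz => Γ.hc m hm x hx z hz) i y hy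
  have h2 : (Γ.G.finsetWalkLength i x y).card = ∏ l ∈ Finset.Icc 1 i, Γ.c' l :=
    count_geodesics Γ.G Γ.conn y Γ.c' (fun m hm z hz => Γ.hc' m hm y hyY' z hz) i x
      (by rw [SimpleGraph.dist_comm]; exact hy)
  have h3 : (Γ.G.finsetWalkLength i y x).card = (Γ.G.finsetWalkLength i x y).card := by
    refine Finset.card_bij' (fun p _ => p.reverse) (fun p _ => p.reverse) ?_ ?_ ?_ ?_
    · intro p hp
      rw [mem_finsetWalkLength_iff, Walk.length_reverse]
      exact mem_finsetWalkLength_iff.mp hp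
    · intro p hp
      rw [mem_finsetWalkLength_iff, Walk.length_reverse]
      exact mem_finsetWalkLength_iff.mp hp
    · intro p _; exact Walk.reverse_reverse p
    · intro p _; exact Walk.reverse_reverse p
  rw [← h1, h3, h2]
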